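/- Let G be a finite simple graph, let P and Q be st-shortest paths of length k, and let S be the set of positions at which the vertex sequences of P and Q differ. If there exists a TJ-reconfiguration sequence from P to Q of length at most ℓ, then there exists a TJ-reconfiguration sequence from P to Q of length at most ℓ in which every position that is ever modified (i.e., every position at which two consecutive paths of the sequence differ) is within index-distance ℓ of some position in S. -/

import Mathlib

open SimpleGraph

/-- `W` is a shortest path from `s` to `t` in `G`: a path whose length (number of edges)
equals `dist_G(s,t)`. -/
def IsShortestSTPath {V : Type*} (G : SimpleGraph V) {s t : V} (W : G.Walk s t) : Prop :=
  W.IsPath ∧ W.length = G.dist s t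

/-- Two `st`-paths of the same length are TJ-adjacent if their vertex sequences differ
at exactly one position. -/
def TJAdjacent {V : Type*} (G : SimpleGraph V) {s t : V} (P Q : G.Walk s t) : Prop :=
  P.length = Q.length ∧ ∃! i : ℕ, P.getVert i ≠ Q.getVert i

/-- A TJ-reconfiguration sequence from `P` to `Q` of length `ℓ`: a sequence
`P = P_0, P_1, …, P_ℓ = Q` of `st`-shortest paths in which consecutive paths are
TJ-adjacent. -/
def TJSeq {V : Type*} (G : SimpleGraph V) {s t : V} (P Q : G.Walk s t) (ℓ : ℕ) : Prop :=
  ∃ f : ℕ → G.Walk s t, f 0 = P ∧ f ℓ = Q ∧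
    (∀ i ≤ ℓ, IsShortestSTPath G (f i)) ∧ ∀ i < ℓ, TJAdjacent G (f i) (f (i + 1))

namespace Stmt3Aux

variable {V : Type*} {G : SimpleGraph V}

/-- Build a walk from a vertex function with adjacency between consecutive values. -/
def buildWalk (G : SimpleGraph V) : (g : ℕ → V) → (n : ℕ) →
    (∀ i < n, G.Adj (g i) (g (i + 1))) → G.Walk (g 0) (g n)
  | _, 0, _ => Walk.nil
  | g, n + 1, h =>
    Walk.cons (h 0 (Nat.succ_pos n))
      (buildWalk G (fun i => g (i + 1)) n (fun i hi => h (i + 1) (Nat.succ_lt_succ hi)))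

lemma getVert_buildWalk : ∀ (n : ℕ) (g : ℕ → V) (h : ∀ i < n, G.Adj (g i) (g (i + 1))) (i : ℕ),
    (buildWalk G g n h).getVert i = g (min i n)
  | 0, g, h, i => by rw [Nat.min_zero]; rfl
  | n + 1, g, h, 0 => by simp [buildWalk]
  | n + 1, g, h, i + 1 => by
    simp only [buildWalk, Walk.getVert_cons_succ]
    rw [getVert_buildWalk n]
    congr 1
    omega

lemma length_buildWalk : ∀ (n : ℕ) (g : ℕ → V) (h : ∀ i < n, G.Adj (g i) (g (i + 1))),
    (buildWalk G g n h).length = n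
  | 0, _, _ => rfl
  | n + 1, g, h => by simp [buildWalk, length_buildWalk n]

lemma support_buildWalk : ∀ (n : ℕ) (g : ℕ → V) (h : ∀ i < n, G.Adj (g i) (g (i + 1))),
    (buildWalk G g n h).support = (List.range (n + 1)).map g
  | 0, _, _ => rfl
  | n + 1, g, h => by
    simp only [buildWalk, Walk.support_cons, support_buildWalk n]
    simp [List.range_succ_eq_map, List.map_map, Function.comp_def]

/-- Walk extensionality: same length and same vertex sequence implies equal. -/
lemma walk_ext {u v : V} (W1 : G.Walk u v) : ∀ (W2 : G.Walk u v),
    W1.length = W2.length → (∀ i, W1.getVert i = W2.getVert i) → W1 = W2 := by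
  induction W1 with
  | nil =>
    intro W2 hl _
    cases W2 with
    | nil => rfl
    | cons _ _ => simp at hl
  | cons h q ih =>
    intro W2 hl hg
    cases W2 with
    | nil => simp at hl
    | cons h2 q2 =>
      have hx : q.getVert 0 = q2.getVert 0 := hg 1
      rw [Walk.getVert_zero, Walk.getVert_zero] at hx
      subst hx
      have hq : q = q2 := ih q2 (by simpa using hl) (fun i => hg (i + 1))
      subst hq
      rfl

/-- On a shortest path, the vertex at position `i` is at distance `i` from the start. -/
lemma dist_getVert {s t : V} {W : G.Walk s t} (hW : IsShortestSTPath G W) {i : ℕ}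
    (hi : i ≤ W.length) : G.dist s (W.getVert i) = i := by
  obtain ⟨w1, hw1len⟩ : ∃ w : G.Walk s (W.getVert i), w.length = i :=
    ⟨(buildWalk G W.getVert i (fun j hj => W.adj_getVert_succ (lt_of_lt_of_le hj hi))).copy
      (W.getVert_zero) rfl, by rw [Walk.length_copy, length_buildWalk]⟩
  obtain ⟨w2, hw2len⟩ : ∃ w : G.Walk (W.getVert i) t, w.length = W.length - i :=
    ⟨(buildWalk G (fun j => W.getVert (i + j)) (W.length - i)
      (fun j hj => by
        have : i + j < W.length := by omega
        exact W.adj_getVert_succ this)).copy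
      (by rw [Nat.add_zero])
      (by rw [show i + (W.length - i) = W.length by omega]; exact W.getVert_length),
      by rw [Walk.length_copy, length_buildWalk]⟩
  have hle : G.dist s (W.getVert i) ≤ w1.length := SimpleGraph.dist_le w1
  have hge : i ≤ G.dist s (W.getVert i) := by
    by_contra hlt
    push_neg at hlt
    have hr : G.Reachable s (W.getVert i) := ⟨w1⟩
    obtain ⟨w, hw⟩ := hr.exists_walk_length_eq_dist
    have := SimpleGraph.dist_le (w.append w2)
    rw [Walk.length_append, hw, hw2len, ← hW.2] at this
    omega
  omega

/-- Compress a lazy sequence (steps are equalities or `C`-steps) into a strict `C`-sequence. -/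
lemma compress {α : Type*} (Sh : α → Prop) (C : α → α → Prop) :
    ∀ (n : ℕ) (g : ℕ → α), (∀ i < n, g i = g (i + 1) ∨ C (g i) (g (i + 1))) →
    (∀ i ≤ n, Sh (g i)) →
    ∃ L ≤ n, ∃ h : ℕ → α, h 0 = g 0 ∧ h L = g n ∧ (∀ i ≤ L, Sh (h i)) ∧
      ∀ i < L, C (h i) (h (i + 1))
  | 0, g, _, hS => ⟨0, le_refl _, g, rfl, rfl, fun i hi => hS i hi, fun i hi => absurd hi (by omega)⟩
  | n + 1, g, hstep, hS => by
    obtain ⟨L, hL, h, h0, hn, hSh, hC⟩ :=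
      compress Sh C n (fun i => g (i + 1)) (fun i hi => hstep (i + 1) (by omega))
        (fun i hi => hS (i + 1) (by omega))
    rcases hstep 0 (by omega) with heq | hc
    · exact ⟨L, by omega, h, by rw [h0, heq], hn, hSh, hC⟩
    · refine ⟨L + 1, by omega, fun i => if i = 0 then g 0 else h (i - 1), by simp, ?_, ?_, ?_⟩
      · simpa using hn
      · intro i hi
        cases i with
        | zero => simpa using hS 0 (by omega)
        | succ j => simpa using hSh j (by omega)
      · intro i hi
        cases i with
        | zero => simpa [h0] using hc
        | succ j => simpa using hC j (by omega)

end Stmt3Aux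

/-- Let `S` be the set of positions at which `P` and `Q` differ. If there
is a TJ-reconfiguration sequence from `P` to `Q` of length at most `ℓ`, then there is one of
length at most `ℓ` in which every modified position is within index-distance `ℓ` of some
position of `S`. -/
theorem stmt_3 {V : Type*} [Fintype V] (G : SimpleGraph V) (s t : V)
    (P Q : G.Walk s t) (hP : IsShortestSTPath G P) (hQ : IsShortestSTPath G Q) (ℓ : ℕ)
    (h : ∃ ℓ' ≤ ℓ, TJSeq G P Q ℓ') :
    ∃ ℓ' ≤ ℓ, ∃ f : ℕ → G.Walk s t, f 0 = P ∧ f ℓ' = Q ∧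
      (∀ i ≤ ℓ', IsShortestSTPath G (f i)) ∧
      (∀ i < ℓ', TJAdjacent G (f i) (f (i + 1))) ∧
      ∀ i < ℓ', ∀ p : ℕ, (f i).getVert p ≠ (f (i + 1)).getVert p →
        ∃ q : ℕ, P.getVert q ≠ Q.getVert q ∧ Nat.dist p q ≤ ℓ := by
  classical
  open Stmt3Aux in
  obtain ⟨ℓ', hℓ', f, hf0, hfl, hshort, hadj⟩ := h
  set k : ℕ := P.length with hkdef
  have hkd : k = G.dist s t := hP.2
  -- clamp the sequence
  set F : ℕ → G.Walk s t := fun i => f (min i ℓ') with hFdef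
  have hFshort : ∀ i, IsShortestSTPath G (F i) := fun i => hshort _ (min_le_right _ _)
  have hFlen : ∀ i, (F i).length = k := fun i => by rw [(hFshort i).2, hkd]
  have hF0 : F 0 = P := by simp [hFdef, hf0]
  have hFl : F ℓ' = Q := by simp [hFdef, hfl]
  have hFadj : ∀ i < ℓ', TJAdjacent G (F i) (F (i + 1)) := by
    intro i hi
    have h1 : min i ℓ' = i := by omega
    have h2 : min (i + 1) ℓ' = i + 1 := by omega
    simpa [hFdef, h1, h2] using hadj i hi
  -- the unique modified position at each step
  set m : ℕ → ℕ := fun i => if hi : i < ℓ' then (hFadj i hi).2.choose else 0 with hmdef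
  have hm1 : ∀ i, i < ℓ' → (F i).getVert (m i) ≠ (F (i + 1)).getVert (m i) := by
    intro i hi
    simp only [hmdef, dif_pos hi]
    exact (hFadj i hi).2.choose_spec.1
  have hm2 : ∀ i, i < ℓ' → ∀ p, (F i).getVert p ≠ (F (i + 1)).getVert p → p = m i := by
    intro i hi p hp
    simp only [hmdef, dif_pos hi]
    exact (hFadj i hi).2.choose_spec.2 p hp
  -- the sets
  set M : Set ℕ := {p | ∃ i < ℓ', (F i).getVert p ≠ (F (i + 1)).getVert p} with hMdef
  set S : Set ℕ := {p | P.getVert p ≠ Q.getVert p} with hSdef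
  set B : Set ℕ := {p | ∃ q ∈ S, ∀ r, ((q < r ∧ r ≤ p) ∨ (p ≤ r ∧ r < q)) → r ∈ M ∪ S}
    with hBdef
  have hSB : ∀ p ∈ S, p ∈ B := fun p hp => ⟨p, hp, fun r hr => absurd hr (by omega)⟩
  have hnotM : ∀ p, p ∉ M → ∀ i, (F i).getVert p = P.getVert p := by
    intro p hp i
    have key : ∀ j, j ≤ ℓ' → (F j).getVert p = P.getVert p := by
      intro j
      induction j with
      | zero => intro _; rw [hF0]
      | succ n ihn =>
        intro hj
        have hn : n < ℓ' := by omega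
        have heq : (F n).getVert p = (F (n + 1)).getVert p := by
          by_contra hne
          exact hp ⟨n, hn, hne⟩
        rw [← heq]
        exact ihn (by omega)
    rcases le_or_gt i ℓ' with hi | hi
    · exact key i hi
    · have : F i = F ℓ' := by simp [hFdef]; congr 1; omega
      rw [this]
      exact key ℓ' le_rfl
  have hclosA : ∀ p, p + 1 ∈ B → p ∈ M ∪ S → p ∈ B := by
    intro p ⟨q, hq, hint⟩ hpMS
    refine ⟨q, hq, fun r hr => ?_⟩
    rcases eq_or_ne r p with rfl | hne
    · exact hpMS
    · exact hint r (by omega)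
  have hclosB : ∀ p, p ∈ B → p + 1 ∈ M ∪ S → p + 1 ∈ B := by
    intro p ⟨q, hq, hint⟩ hpMS
    refine ⟨q, hq, fun r hr => ?_⟩
    rcases eq_or_ne r (p + 1) with rfl | hne
    · exact hpMS
    · exact hint r (by omega)
  -- cardinality bound
  have hMcard : ∀ T : Finset ℕ, (∀ r ∈ T, r ∈ M) → T.card ≤ ℓ' := by
    intro T hT
    have hsub : T ⊆ (Finset.range ℓ').image m := by
      intro r hr
      obtain ⟨i, hi, hne⟩ := hT r hr
      exact Finset.mem_image.2 ⟨i, Finset.mem_range.2 hi, (hm2 i hi r hne).symm⟩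
    calc T.card ≤ ((Finset.range ℓ').image m).card := Finset.card_le_card hsub
      _ ≤ (Finset.range ℓ').card := Finset.card_image_le
      _ = ℓ' := Finset.card_range ℓ'
  -- distance bound for positions in B ∩ M
  have hB4 : ∀ p, p ∈ B → p ∈ M → ∃ q, q ∈ S ∧ Nat.dist p q ≤ ℓ := by
    intro p hpB hpM
    obtain ⟨q, hq, hint⟩ := hpB
    rcases le_or_gt q p with hqp | hpq
    · set T : Finset ℕ := (Finset.Icc q p).filter (fun r => r ∈ S) with hTdef
      have hqT : q ∈ T := by simp [hTdef, hqp, hq]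
      have hTne : T.Nonempty := ⟨q, hqT⟩
      set q' : ℕ := T.max' hTne with hq'def
      have hq'T : q' ∈ T := T.max'_mem hTne
      have hq'S : q' ∈ S := (Finset.mem_filter.1 hq'T).2
      have hq'I : q ≤ q' ∧ q' ≤ p := by
        have := (Finset.mem_filter.1 hq'T).1
        exact Finset.mem_Icc.1 this
      have hcard : p - q' ≤ ℓ' := by
        have := hMcard (Finset.Ioc q' p) (fun r hr => by
          rw [Finset.mem_Ioc] at hr
          have hrMS : r ∈ M ∪ S := hint r (by omega)
          rcases hrMS with hrM | hrS
          · exact hrM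
          · exfalso
            have hrT : r ∈ T := by
              simp only [hTdef, Finset.mem_filter, Finset.mem_Icc]
              exact ⟨⟨by omega, hr.2⟩, hrS⟩
            have := T.le_max' r hrT
            omega)
        rwa [Nat.card_Ioc] at this
      exact ⟨q', hq'S, by rw [Nat.dist_eq_sub_of_le_right hq'I.2]; omega⟩
    · set T : Finset ℕ := (Finset.Icc p q).filter (fun r => r ∈ S) with hTdef
      have hqT : q ∈ T := by simp [hTdef, hq]; omega
      have hTne : T.Nonempty := ⟨q, hqT⟩
      set q' : ℕ := T.min' hTne with hq'def
      have hq'T : q' ∈ T := T.min'_mem hTne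
      have hq'S : q' ∈ S := (Finset.mem_filter.1 hq'T).2
      have hq'I : p ≤ q' ∧ q' ≤ q := by
        have := (Finset.mem_filter.1 hq'T).1
        exact Finset.mem_Icc.1 this
      have hcard : q' - p ≤ ℓ' := by
        have := hMcard (Finset.Ico p q') (fun r hr => by
          rw [Finset.mem_Ico] at hr
          have hrMS : r ∈ M ∪ S := hint r (by omega)
          rcases hrMS with hrM | hrS
          · exact hrM
          · exfalso
            have hrT : r ∈ T := by
              simp only [hTdef, Finset.mem_filter, Finset.mem_Icc]
              exact ⟨⟨hr.1, by omega⟩, hrS⟩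
            have := T.min'_le r hrT
            omega)
        rwa [Nat.card_Ico] at this
      exact ⟨q', hq'S, by rw [Nat.dist_eq_sub_of_le hq'I.1]; omega⟩
  -- the spliced vertex functions
  set gv : ℕ → ℕ → V := fun i p => if p ∈ B then (F i).getVert p else P.getVert p with hgvdef
  have hgv_eqP : ∀ i p, p ∉ M → gv i p = P.getVert p := by
    intro i p hp
    simp only [hgvdef]
    split
    · exact hnotM p hp i
    · rfl
  have hdistgv : ∀ i p, p ≤ k → G.dist s (gv i p) = p := by
    intro i p hp
    simp only [hgvdef]
    split
    · exact dist_getVert (hFshort i) (by rw [hFlen]; exact hp)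
    · exact dist_getVert hP hp
  have hadjgv : ∀ i, ∀ p < k, G.Adj (gv i p) (gv i (p + 1)) := by
    intro i p hp
    have hFadj' : G.Adj ((F i).getVert p) ((F i).getVert (p + 1)) :=
      (F i).adj_getVert_succ (by rw [hFlen]; exact hp)
    have hPadj : G.Adj (P.getVert p) (P.getVert (p + 1)) :=
      P.adj_getVert_succ hp
    by_cases h1 : p ∈ B <;> by_cases h2 : (p + 1) ∈ B
    · simpa [hgvdef, h1, h2] using hFadj'
    · have hp1M : (p + 1) ∉ M := fun hm => h2 (hclosB p h1 (Or.inl hm))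
      have : (F i).getVert (p + 1) = P.getVert (p + 1) := hnotM _ hp1M i
      simp only [hgvdef, if_pos h1, if_neg h2]
      rw [← this]
      exact hFadj'
    · have hpM : p ∉ M := fun hm => h1 (hclosA p h2 (Or.inl hm))
      have : (F i).getVert p = P.getVert p := hnotM _ hpM i
      simp only [hgvdef, if_neg h1, if_pos h2]
      rw [← this]
      exact hFadj'
    · simpa [hgvdef, h1, h2] using hPadj
  have hgv0 : ∀ i, gv i 0 = s := by
    intro i
    simp only [hgvdef]
    split <;> simp
  have hgvk : ∀ i, gv i k = t := by
    intro i
    simp only [hgvdef]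
    split
    · rw [← hFlen i]; exact (F i).getVert_length
    · exact P.getVert_length
  -- the spliced walks
  set W : ℕ → G.Walk s t := fun i =>
    (buildWalk G (gv i) k (hadjgv i)).copy (hgv0 i) (hgvk i) with hWdef
  have hWget : ∀ i p, (W i).getVert p = gv i (min p k) := by
    intro i p
    simp [hWdef, getVert_buildWalk]
  have hWlen : ∀ i, (W i).length = k := by
    intro i
    simp [hWdef, length_buildWalk]
  have hWshort : ∀ i, IsShortestSTPath G (W i) := by
    intro i
    constructor
    · rw [Walk.isPath_def, hWdef]
      simp only [Walk.support_copy, support_buildWalk]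
      refine List.Nodup.map_on ?_ List.nodup_range
      intro x hx y hy hxy
      rw [List.mem_range] at hx hy
      have h1 : G.dist s (gv i x) = x := hdistgv i x (by omega)
      have h2 : G.dist s (gv i y) = y := hdistgv i y (by omega)
      rw [← h1, ← h2, hxy]
    · rw [hWlen, hkd]
  have hW0 : W 0 = P := by
    refine walk_ext (W 0) P (by rw [hWlen]) (fun p => ?_)
    rw [hWget]
    have : gv 0 (min p k) = P.getVert (min p k) := by
      simp only [hgvdef]
      split
      · rw [hF0]
      · rfl
    rw [this]
    rcases le_or_gt p k with hpk | hpk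
    · rw [min_eq_left hpk]
    · have e1 : P.getVert k = t := by rw [hkdef]; exact P.getVert_length
      have e2 : P.getVert p = t := P.getVert_of_length_le (by omega)
      rw [min_eq_right (le_of_lt hpk), e1, e2]
  have hWl : W ℓ' = Q := by
    have hQlen : Q.length = k := by rw [hQ.2, hkd]
    refine walk_ext (W ℓ') Q (by rw [hWlen, hQlen]) (fun p => ?_)
    rw [hWget]
    have : gv ℓ' (min p k) = Q.getVert (min p k) := by
      simp only [hgvdef]
      split
      · rw [hFl]
      · rename_i hB'
        by_contra hne
        exact hB' (hSB _ hne)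
    rw [this]
    rcases le_or_gt p k with hpk | hpk
    · rw [min_eq_left hpk]
    · have e1 : Q.getVert k = t := by rw [← hQlen]; exact Q.getVert_length
      have e2 : Q.getVert p = t := Q.getVert_of_length_le (by omega)
      rw [min_eq_right (le_of_lt hpk), e1, e2]
  -- differences between consecutive spliced walks
  have hWdiff : ∀ i, i < ℓ' → ∀ p, (W i).getVert p ≠ (W (i + 1)).getVert p →
      p = m i ∧ p ∈ B ∧ p < k := by
    intro i hi p hne
    rw [hWget, hWget] at hne
    have hpB : min p k ∈ B := by
      by_contra hB'
      simp only [hgvdef, if_neg hB'] at hne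
      exact hne rfl
    have hFne : (F i).getVert (min p k) ≠ (F (i + 1)).getVert (min p k) := by
      simpa [hgvdef, hpB] using hne
    have hmin : min p k = m i := hm2 i hi _ hFne
    have hplt : min p k < k := by
      rcases lt_or_ge (min p k) k with h' | h'
      · exact h'
      · exfalso
        have hk1 : min p k = k := by omega
        rw [hk1] at hFne
        rw [show k = (F i).length from (hFlen i).symm] at hFne
        rw [(F i).getVert_length] at hFne
        rw [show (F i).length = (F (i+1)).length by rw [hFlen, hFlen]] at hFne
        rw [(F (i+1)).getVert_length] at hFne
        exact hFne rfl
    have hpk : p = min p k := by omega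
    exact ⟨by omega, by rwa [← hpk] at hpB, by omega⟩
  -- each step is either trivial or a good TJ step
  have hsteps : ∀ i < ℓ', W i = W (i + 1) ∨
      (TJAdjacent G (W i) (W (i + 1)) ∧
        ∀ p, (W i).getVert p ≠ (W (i + 1)).getVert p →
          ∃ q, P.getVert q ≠ Q.getVert q ∧ Nat.dist p q ≤ ℓ) := by
    intro i hi
    by_cases hmB : m i ∈ B
    · right
      have hmk : m i < k := by
        by_contra hge
        push_neg at hge
        have := hm1 i hi
        rw [Walk.getVert_of_length_le _ (by rw [hFlen]; omega),
          Walk.getVert_of_length_le _ (by rw [hFlen]; omega)] at this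
        exact this rfl
      have hWne : (W i).getVert (m i) ≠ (W (i + 1)).getVert (m i) := by
        rw [hWget, hWget, min_eq_left (le_of_lt hmk)]
        simpa [hgvdef, hmB] using hm1 i hi
      refine ⟨⟨by rw [hWlen, hWlen], m i, hWne, fun p hp => (hWdiff i hi p hp).1⟩, ?_⟩
      intro p hp
      obtain ⟨hpm, hpB, _⟩ := hWdiff i hi p hp
      have hpM : p ∈ M := ⟨i, hi, by rw [hpm]; exact hm1 i hi⟩
      obtain ⟨q, hqS, hqd⟩ := hB4 p hpB hpM
      exact ⟨q, hqS, hqd⟩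
    · left
      refine walk_ext (W i) (W (i + 1)) (by rw [hWlen, hWlen]) (fun p => ?_)
      by_contra hne
      obtain ⟨hpm, hpB, _⟩ := hWdiff i hi p hne
      rw [hpm] at hpB
      exact hmB hpB
  -- compress and conclude
  obtain ⟨L, hLle, g, hg0, hgL, hgshort, hgC⟩ :=
    compress (IsShortestSTPath G)
      (fun X Y => TJAdjacent G X Y ∧
        ∀ p, X.getVert p ≠ Y.getVert p →
          ∃ q, P.getVert q ≠ Q.getVert q ∧ Nat.dist p q ≤ ℓ)
      ℓ' W hsteps (fun i _ => hWshort i)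
  refine ⟨L, le_trans hLle hℓ', g, by rw [hg0, hW0], by rw [hgL, hWl], hgshort,
    fun i hi => (hgC i hi).1, fun i hi => (hgC i hi).2⟩
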